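/- Let N and t be positive integers with t ≤ N, and let m ∈ ℝ^N have nonnegative entries arranged in nondecreasing order (m[1] ≤ m[2] ≤ ⋯ ≤ m[N]). Let t' = Σ_{n=1}^{N} m[n] and let N' be the number of indices n with m[n] > 0. Suppose t·m[n] ≤ t' for all n and N' ≥ t+1. Set α = min(t'/t − m[N−t+1], m[N−N'+1]), and define m' ∈ ℝ^N by m'[n] = m[n] − α for n = N−N'+1 and for n ∈ {N−t+2, …, N}, and m'[n] = m[n] otherwise. Then m'[n] ≥ 0 for all n, and t·m'[n] ≤ Σ_{i=1}^{N} m'[i] for all n; that is, after the iteration a filling-problem solution still exists for the remaining storage. -/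
import Mathlib


theorem stmt_13 (N t : ℕ) (ht : 0 < t) (htN : t ≤ N)
    (m : Fin N → ℝ) (hm : ∀ n, 0 ≤ m n) (hmono : Monotone m)
    (t' : ℝ) (ht' : t' = ∑ n, m n)
    (N' : ℕ) (hN' : N' = (Finset.univ.filter (fun n => 0 < m n)).card)
    (hcond : ∀ n, (t : ℝ) * m n ≤ t')
    (hN'big : t + 1 ≤ N')
    (α : ℝ) (hα : α = min (t' / t - m ⟨N - t, by omega⟩) (m ⟨N - N', by omega⟩))
    (m' : Fin N → ℝ)
    (hm' : ∀ n : Fin N,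
      m' n = if (n : ℕ) = N - N' ∨ N - t + 1 ≤ (n : ℕ) then m n - α else m n) :
    (∀ n, 0 ≤ m' n) ∧ ∀ n, (t : ℝ) * m' n ≤ ∑ i, m' i := by
  have hNN : N' ≤ N := by
    rw [hN']
    exact (Finset.card_filter_le _ _).trans (by simp)
  have htR : (0:ℝ) < t := Nat.cast_pos.mpr ht
  set a : Fin N := ⟨N - t, by omega⟩ with ha
  set b : Fin N := ⟨N - N', by omega⟩ with hb
  have hα1 : α ≤ t' / t - m a := hα ▸ min_le_left _ _
  have hα2 : α ≤ m b := hα ▸ min_le_right _ _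
  have hnonneg : ∀ n, 0 ≤ m' n := by
    intro n
    rw [hm' n]
    split
    · rename_i h
      have hbn : m b ≤ m n := by
        apply hmono
        simp only [Fin.le_def, hb]
        rcases h with h | h <;> omega
      linarith
    · exact hm n
  refine ⟨hnonneg, ?_⟩
  -- sum computation
  have hcard : ((Finset.range N).filter
      (fun n => n = N - N' ∨ N - t + 1 ≤ n)).card = t := by
    have hset : (Finset.range N).filter (fun n => n = N - N' ∨ N - t + 1 ≤ n)
        = insert (N - N') (Finset.Ico (N - t + 1) N) := by
      ext x
      simp only [Finset.mem_filter, Finset.mem_range, Finset.mem_insert,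
        Finset.mem_Ico]
      omega
    rw [hset, Finset.card_insert_of_notMem (by simp [Finset.mem_Ico]; omega),
      Nat.card_Ico]
    omega
  have hsum : ∑ i, m' i = t' - t * α := by
    have h1 : ∀ i : Fin N, m' i
        = m i - (if (i:ℕ) = N - N' ∨ N - t + 1 ≤ (i:ℕ) then α else 0) := by
      intro i
      rw [hm' i]
      split <;> simp
    rw [Finset.sum_congr rfl (fun i _ => h1 i), Finset.sum_sub_distrib, ← ht']
    congr 1
    rw [Fin.sum_univ_eq_sum_range
      (fun n => if n = N - N' ∨ N - t + 1 ≤ n then α else 0) N,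
      ← Finset.sum_filter, Finset.sum_const, hcard, nsmul_eq_mul]
  intro n
  rw [hsum, hm' n]
  split
  · have := hcond n
    linarith
  · rename_i h
    push_neg at h
    have hna : m n ≤ m a := by
      apply hmono
      simp only [Fin.le_def, ha]
      omega
    have h2 : (t:ℝ) * α ≤ t' - t * m a := by
      have := mul_le_mul_of_nonneg_left hα1 (le_of_lt htR)
      rw [mul_sub, mul_div_cancel₀ _ (ne_of_gt htR)] at this
      linarith
    nlinarith
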